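/- arXiv:1508.05282 — 2 statements merged into one kernel-verified Lean document; each statement's English description precedes it below -/
import Mathlib

section
/- Let G be a finite simple graph with n ≥ 1 vertices and m edges, let M ≥ 1 and t be natural numbers, and let G' be the simple graph defined as follows: the vertex set of G' is V(G) ⊎ K where |K| = M·n; two vertices of V(G) are adjacent in G' iff they are distinct and non-adjacent in G; any two distinct vertices of K are adjacent in G'; and every vertex of K is adjacent in G' to every vertex of V(G). If G' admits a linear arrangement π with cost(π) + t·M·n ≤ binom((M+1)·n + 1, 3), then there exists a partition (A, B) of V(G) such that M·|E_G(A,B)| + 2m ≥ M·t, where E_G(A,B) is the set of edges of G with one endpoint in A and the other in B. -/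
open Classical

/-- The graph `G'` of the reduction of Garey, Johnson and Stockmeyer: the complement of
`G` together with a clique `K` on `N` fresh vertices that is fully connected to the rest
of the graph. -/
def gareyGraph {V : Type*} (G : SimpleGraph V) (N : ℕ) : SimpleGraph (V ⊕ Fin N) where
  Adj x y := x ≠ y ∧ ∀ u v, x = Sum.inl u → y = Sum.inl v → ¬ G.Adj u v
  symm := by
    constructor
    rintro x y ⟨hne, h⟩
    exact ⟨hne.symm, fun u v hy hx hadj => h v u hx hy hadj.symm⟩
  loopless := ⟨fun x h => h.1 rfl⟩

/-- The cost of the vertex placement `f : V → ℤ` for the simple graph `G`: the sum over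
all edges `{u, v}` of `G` of `|f u - f v|`. -/
noncomputable def lincost {V : Type*} [Fintype V] [DecidableEq V]
    (G : SimpleGraph V) (f : V → ℤ) : ℤ :=
  ∑ e ∈ Finset.univ.filter (fun e : Sym2 V => e ∈ G.edgeSet),
    Sym2.lift ⟨fun u v => |f u - f v|, fun u v => abs_sub_comm (f u) (f v)⟩ e

/-- The size of the cut determined by `S` in the simple graph `G`: the number of edges of
`G` with exactly one endpoint in `S`. -/
noncomputable def cutSizeS {V : Type*} [Fintype V] [DecidableEq V]
    (G : SimpleGraph V) (S : Finset V) : ℕ :=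
  (Finset.univ.filter fun e : Sym2 V =>
    e ∈ G.edgeSet ∧ ∃ u v, e = s(u, v) ∧ u ∈ S ∧ v ∉ S).card

/-- The number of edges of the simple graph `G`. -/
noncomputable def edgeCount {V : Type*} [Fintype V] [DecidableEq V]
    (G : SimpleGraph V) : ℕ :=
  (Finset.univ.filter fun e : Sym2 V => e ∈ G.edgeSet).card

open Finset

private lemma hockey2 (N : ℕ) : ∑ i ∈ range N, (N - i) = (N + 1).choose 2 := by
  induction N with
  | zero => decide
  | succ N ih =>
    have h : ∀ i ∈ range N, N + 1 - i = (N - i) + 1 := fun i hi => by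
      have := Finset.mem_range.1 hi; omega
    rw [Finset.sum_range_succ, Finset.sum_congr rfl h, Finset.sum_add_distrib,
      Finset.sum_const, ih]
    simp [Nat.choose_succ_succ (N + 1) 1, Nat.choose_one_right]
    omega

private lemma dsum (N : ℕ) :
    ∑ i ∈ range N, ∑ j ∈ range N, (i - j + (j - i)) = 2 * (N + 1).choose 3 := by
  induction N with
  | zero => decide
  | succ N ih =>
    have step1 : ∑ i ∈ range (N+1), ∑ j ∈ range (N+1), (i - j + (j - i))
        = (∑ i ∈ range (N+1), ∑ j ∈ range N, (i - j + (j - i)))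
          + ∑ i ∈ range (N+1), (i - N + (N - i)) := by
      rw [← Finset.sum_add_distrib]
      exact Finset.sum_congr rfl fun i _ => Finset.sum_range_succ _ _
    rw [step1]
    simp only [Finset.sum_range_succ]
    have e1 : ∑ j ∈ range N, (N - j + (j - N)) = ∑ j ∈ range N, (N - j) :=
      Finset.sum_congr rfl fun j hj => by have := Finset.mem_range.1 hj; omega
    have e2 : ∑ i ∈ range N, (i - N + (N - i)) = ∑ i ∈ range N, (N - i) :=
      Finset.sum_congr rfl fun i hi => by have := Finset.mem_range.1 hi; omega
    rw [ih, e1, e2, hockey2]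
    have hc := Nat.choose_succ_succ' (N + 1) 2
    norm_num at hc
    omega

private lemma abs_cast (a b : ℕ) : |(a:ℤ) - b| = ((a - b + (b - a) : ℕ) : ℤ) := by
  rcases le_total a b with h | h
  · rw [abs_of_nonpos (by omega : (a:ℤ) - b ≤ 0)]; omega
  · rw [abs_of_nonneg (by omega : (0:ℤ) ≤ (a:ℤ) - b)]; omega

private lemma total_sum {α : Type*} [Fintype α] {N : ℕ} (π : α ≃ Fin N) :
    ∑ x : α, ∑ y : α, |((π x : ℕ):ℤ) - ((π y : ℕ):ℤ)| = 2 * ((N + 1).choose 3 : ℤ) := by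
  have h1 : ∑ x : α, ∑ y : α, |((π x : ℕ):ℤ) - ((π y : ℕ):ℤ)|
      = ∑ i : Fin N, ∑ j : Fin N, |((i:ℕ):ℤ) - ((j:ℕ):ℤ)| := by
    calc ∑ x : α, ∑ y : α, |((π x : ℕ):ℤ) - ((π y : ℕ):ℤ)|
        = ∑ x : α, ∑ j : Fin N, |((π x : ℕ):ℤ) - ((j:ℕ):ℤ)| :=
          Finset.sum_congr rfl fun x _ =>
            Equiv.sum_comp π (fun j : Fin N => |(((π x):ℕ):ℤ) - ((j:ℕ):ℤ)|)
      _ = ∑ i : Fin N, ∑ j : Fin N, |((i:ℕ):ℤ) - ((j:ℕ):ℤ)| :=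
          Equiv.sum_comp π (fun i : Fin N => ∑ j : Fin N, |((i:ℕ):ℤ) - ((j:ℕ):ℤ)|)
  rw [h1]
  rw [Fin.sum_univ_eq_sum_range (fun i => ∑ j : Fin N, |((i:ℕ):ℤ) - ((j:ℕ):ℤ)|)]
  have h2 : ∀ i, ∑ j : Fin N, |((i:ℕ):ℤ) - ((j:ℕ):ℤ)|
      = ∑ j ∈ range N, |((i:ℕ):ℤ) - ((j:ℕ):ℤ)| := fun i =>
    Fin.sum_univ_eq_sum_range (fun j => |((i:ℕ):ℤ) - ((j:ℕ):ℤ)|) N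
  rw [Finset.sum_congr rfl fun i _ => h2 i]
  calc ∑ i ∈ range N, ∑ j ∈ range N, |((i:ℕ):ℤ) - ((j:ℕ):ℤ)|
      = ∑ i ∈ range N, ∑ j ∈ range N, ((i - j + (j - i) : ℕ) : ℤ) :=
        Finset.sum_congr rfl fun i _ => Finset.sum_congr rfl fun j _ => abs_cast i j
    _ = ((∑ i ∈ range N, ∑ j ∈ range N, (i - j + (j - i)) : ℕ) : ℤ) := by push_cast; ring
    _ = 2 * ((N + 1).choose 3 : ℤ) := by rw [dsum]; push_cast; ring

private lemma sym2_offdiag_sum {α : Type*} [Fintype α] [DecidableEq α] (f : α → ℤ) :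
    2 * ∑ e ∈ Finset.univ.filter (fun e : Sym2 α => ¬ e.IsDiag),
        Sym2.lift ⟨fun u v => |f u - f v|, fun u v => abs_sub_comm (f u) (f v)⟩ e
      = ∑ x : α, ∑ y : α, |f x - f y| := by
  set F : Sym2 α → ℤ :=
    Sym2.lift ⟨fun u v => |f u - f v|, fun u v => abs_sub_comm (f u) (f v)⟩ with hF
  have hrhs : ∑ x : α, ∑ y : α, |f x - f y|
      = ∑ p ∈ (univ ×ˢ univ : Finset (α × α)), F (Sym2.mk.uncurry p) := by
    rw [Finset.sum_product]
    exact Finset.sum_congr rfl fun x _ => Finset.sum_congr rfl fun y _ => by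
      simp [hF]
  rw [hrhs, Finset.sum_comp F Sym2.mk.uncurry]
  have himg : (univ ×ˢ univ : Finset (α × α)).image Sym2.mk.uncurry = (univ : Finset (Sym2 α)) := by
    ext e
    refine ⟨fun _ => Finset.mem_univ _, fun _ => ?_⟩
    induction e with
    | _ x y => exact Finset.mem_image.2 ⟨(x, y), by simp, rfl⟩
  rw [himg]
  rw [← Finset.sum_filter_add_sum_filter_not univ (fun e : Sym2 α => ¬ e.IsDiag)]
  have hdiag : ∑ e ∈ univ.filter (fun e : Sym2 α => ¬¬ e.IsDiag),
      (#(filter (fun p => Sym2.mk.uncurry p = e) (univ ×ˢ univ))) • F e = 0 := by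
    refine Finset.sum_eq_zero fun e he => ?_
    have hd : e.IsDiag := not_not.1 (Finset.mem_filter.1 he).2
    induction e with
    | _ x y =>
      have : x = y := (Sym2.mk_isDiag_iff).1 hd
      subst this
      simp [hF]
  rw [hdiag, add_zero]
  have hfiber : ∀ e ∈ univ.filter (fun e : Sym2 α => ¬ e.IsDiag),
      (#(filter (fun p => Sym2.mk.uncurry p = e) (univ ×ˢ univ))) • F e = 2 * F e := by
    intro e he
    have hd : ¬ e.IsDiag := (Finset.mem_filter.1 he).2
    induction e with
    | _ x y =>
      have hxy : x ≠ y := fun h => hd (by simp [h])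
      have : filter (fun p : α × α => Sym2.mk.uncurry p = s(x, y)) (univ ×ˢ univ)
          = {(x, y), (y, x)} := by
        ext ⟨a, b⟩
        simp only [Finset.mem_filter, Finset.mem_product, Finset.mem_univ, true_and,
          Finset.mem_insert, Finset.mem_singleton, Prod.mk.injEq]
        constructor
        · intro h
          rcases Sym2.eq_iff.1 h with ⟨h1, h2⟩ | ⟨h1, h2⟩
          · exact Or.inl ⟨h1, h2⟩
          · exact Or.inr ⟨h1, h2⟩
        · rintro (⟨h1, h2⟩ | ⟨h1, h2⟩) <;> subst h1 <;> subst h2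
          · rfl
          · exact Sym2.eq_swap
      rw [this, Finset.card_pair (by simp [hxy, Ne.symm hxy])]
      simp [two_smul, two_mul]
  rw [Finset.sum_congr rfl hfiber, ← Finset.mul_sum]

private lemma garey_split {V : Type*} [Fintype V] [DecidableEq V] (G : SimpleGraph V) (N : ℕ)
    (f : V ⊕ Fin N → ℤ) :
    ∑ e ∈ Finset.univ.filter (fun e : Sym2 (V ⊕ Fin N) => ¬ e.IsDiag),
        Sym2.lift ⟨fun u v => |f u - f v|, fun u v => abs_sub_comm (f u) (f v)⟩ e
      = lincost (gareyGraph G N) f + lincost G (fun v => f (Sum.inl v)) := by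
  set F : Sym2 (V ⊕ Fin N) → ℤ :=
    Sym2.lift ⟨fun u v => |f u - f v|, fun u v => abs_sub_comm (f u) (f v)⟩ with hF
  rw [← Finset.sum_filter_add_sum_filter_not
    (univ.filter fun e : Sym2 (V ⊕ Fin N) => ¬ e.IsDiag)
    (fun e => e ∈ (gareyGraph G N).edgeSet) F]
  congr 1
  · rw [Finset.filter_filter]
    apply Finset.sum_congr _ fun _ _ => rfl
    apply Finset.filter_congr
    intro e _
    exact ⟨fun h => h.2, fun h => ⟨(gareyGraph G N).not_isDiag_of_mem_edgeSet h, h⟩⟩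
  · rw [Finset.filter_filter]
    have himg : Finset.filter
          (fun e : Sym2 (V ⊕ Fin N) => ¬ e.IsDiag ∧ ¬ e ∈ (gareyGraph G N).edgeSet) univ
        = (univ.filter (fun e : Sym2 V => e ∈ G.edgeSet)).image (Sym2.map Sum.inl) := by
      ext e
      induction e with
      | _ x y =>
        simp only [Finset.mem_filter, Finset.mem_univ, true_and, Finset.mem_image,
          SimpleGraph.mem_edgeSet, Sym2.mk_isDiag_iff]
        constructor
        · rintro ⟨hxy, hne⟩
          rw [gareyGraph] at hne
          change ¬ (x ≠ y ∧ ∀ u v, x = Sum.inl u → y = Sum.inl v → ¬ G.Adj u v) at hne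
          push_neg at hne
          obtain ⟨u, v, hu, hv, hadj⟩ := hne hxy
          exact ⟨s(u, v), by simpa using hadj, by rw [Sym2.map_pair_eq, ← hu, ← hv]⟩
        · simp only [Sym2.exists, Finset.mem_filter, Finset.mem_univ, true_and,
            SimpleGraph.mem_edgeSet, Sym2.map_pair_eq]
          rintro ⟨a, b, he', heq⟩
          have hab : a ≠ b := he'.ne
          rcases Sym2.eq_iff.1 heq with ⟨h1, h2⟩ | ⟨h1, h2⟩
          · subst h1; subst h2
            refine ⟨by simpa using hab, fun hadj => ?_⟩
            exact (show _ ∧ _ from hadj).2 a b rfl rfl he'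
          · subst h1; subst h2
            refine ⟨by simpa using hab.symm, fun hadj => ?_⟩
            exact (show _ ∧ _ from hadj).2 b a rfl rfl he'.symm
    rw [himg, Finset.sum_image (fun a _ b _ h => Sym2.map.injective Sum.inl_injective h)]
    apply Finset.sum_congr rfl
    intro e _
    induction e with
    | _ x y => simp [hF, Sym2.map_pair_eq]

private lemma cross_card (Nn a b : ℕ) (ha : a < Nn) (hb : b < Nn) :
    |(a:ℤ) - b| = ∑ k ∈ range Nn,
      (if (a ≤ k ∧ ¬ b ≤ k) ∨ (b ≤ k ∧ ¬ a ≤ k) then (1:ℤ) else 0) := by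
  rw [Finset.sum_boole]
  have h : (range Nn).filter (fun k => (a ≤ k ∧ ¬ b ≤ k) ∨ (b ≤ k ∧ ¬ a ≤ k))
      = Finset.Ico (min a b) (max a b) := by
    ext k
    simp only [Finset.mem_filter, Finset.mem_range, Finset.mem_Ico]
    omega
  rw [h, Nat.card_Ico, abs_cast]
  congr 1
  omega

private lemma lincost_eq_cuts {V : Type*} [Fintype V] [DecidableEq V] (G : SimpleGraph V)
    {Nn : ℕ} (h : V → Fin Nn) :
    lincost G (fun v => ((h v : ℕ) : ℤ))
      = ∑ k ∈ range Nn, (cutSizeS G (univ.filter fun v => (h v : ℕ) ≤ k) : ℤ) := by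
  rw [lincost]
  have step : ∀ e ∈ univ.filter (fun e : Sym2 V => e ∈ G.edgeSet),
      Sym2.lift ⟨fun u v => |((h u : ℕ):ℤ) - ((h v : ℕ):ℤ)|,
          fun u v => abs_sub_comm _ _⟩ e
        = ∑ k ∈ range Nn, (if (∃ u v, e = s(u, v)
            ∧ u ∈ (univ.filter fun w : V => (h w : ℕ) ≤ k)
            ∧ v ∉ (univ.filter fun w : V => (h w : ℕ) ≤ k)) then (1:ℤ) else 0) := by
    intro e he
    induction e with
    | _ x y =>
      simp only [Sym2.lift_mk]
      rw [cross_card Nn (h x) (h y) (h x).isLt (h y).isLt]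
      refine Finset.sum_congr rfl fun k _ => ?_
      refine if_congr ?_ rfl rfl
      simp only [Finset.mem_filter, Finset.mem_univ, true_and]
      constructor
      · rintro (⟨h1, h2⟩ | ⟨h1, h2⟩)
        · exact ⟨x, y, rfl, h1, h2⟩
        · exact ⟨y, x, Sym2.eq_swap.symm, h1, h2⟩
      · rintro ⟨u, v, heq, hu, hv⟩
        rcases Sym2.eq_iff.1 heq with ⟨rfl, rfl⟩ | ⟨rfl, rfl⟩
        · exact Or.inl ⟨hu, hv⟩
        · exact Or.inr ⟨hu, hv⟩
  rw [Finset.sum_congr rfl step, Finset.sum_comm]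
  refine Finset.sum_congr rfl fun k _ => ?_
  rw [Finset.sum_boole]
  congr 1
  rw [cutSizeS]
  refine congrArg Finset.card ?_
  ext e
  simp only [Finset.mem_filter, Finset.mem_univ, true_and]

/-- If the graph `G'` obtained by adding a fully connected clique of `M·n` fresh vertices
to the complement of `G` (where `G` has `n ≥ 1` vertices and `m` edges) admits a linear
arrangement `π` with `cost(π) + t·M·n ≤ C((M+1)·n + 1, 3)`, then `G` has a partition
`(A, B)` of its vertex set with `M·|E_G(A,B)| + 2m ≥ M·t`. -/
theorem maxcut_to_ola_backward {V : Type*} [Fintype V] [DecidableEq V]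
    (G : SimpleGraph V)
    (n : ℕ) (hn : n = Fintype.card V) (hn1 : 1 ≤ n)
    (m : ℕ) (hm : m = edgeCount G)
    (M t : ℕ) (hM : 1 ≤ M)
    (π : (V ⊕ Fin (M * n)) ≃ Fin (n + M * n))
    (hπ : lincost (gareyGraph G (M * n)) (fun v => ((π v : ℕ) : ℤ)) + (t * M * n : ℕ) ≤
      (Nat.choose ((M + 1) * n + 1) 3 : ℤ)) :
    ∃ A : Finset V, M * t ≤ M * cutSizeS G A + 2 * m := by
  have htot : ∑ e ∈ Finset.univ.filter (fun e : Sym2 (V ⊕ Fin (M * n)) => ¬ e.IsDiag),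
      Sym2.lift ⟨fun u v => |((π u : ℕ) : ℤ) - ((π v : ℕ) : ℤ)|,
        fun u v => abs_sub_comm _ _⟩ e
      = (((n + M * n) + 1).choose 3 : ℤ) := by
    have h2 := sym2_offdiag_sum (fun v : V ⊕ Fin (M * n) => ((π v : ℕ) : ℤ))
    rw [total_sum π] at h2
    exact mul_left_cancel₀ two_ne_zero h2
  have hsplit : ∑ e ∈ Finset.univ.filter (fun e : Sym2 (V ⊕ Fin (M * n)) => ¬ e.IsDiag),
      Sym2.lift ⟨fun u v => |((π u : ℕ) : ℤ) - ((π v : ℕ) : ℤ)|,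
        fun u v => abs_sub_comm _ _⟩ e
      = lincost (gareyGraph G (M * n)) (fun v => ((π v : ℕ) : ℤ))
        + lincost G (fun v => ((π (Sum.inl v) : ℕ) : ℤ)) :=
    garey_split G (M * n) (fun v => ((π v : ℕ) : ℤ))
  have hb : (((M + 1) * n + 1).choose 3 : ℤ) = (((n + M * n) + 1).choose 3 : ℤ) := by
    have : (M + 1) * n = n + M * n := by ring
    rw [this]
  have hS : (t * M * n : ℤ) ≤ lincost G (fun v => ((π (Sum.inl v) : ℕ) : ℤ)) := by
    rw [hb, ← htot, hsplit] at hπ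
    push_cast at hπ ⊢
    linarith
  have hcut : lincost G (fun v => ((π (Sum.inl v) : ℕ) : ℤ))
      = ∑ k ∈ range (n + M * n),
        (cutSizeS G (univ.filter fun v => ((π (Sum.inl v) : ℕ)) ≤ k) : ℤ) :=
    lincost_eq_cuts G (fun v => π (Sum.inl v))
  have hSnat : t * M * n ≤ ∑ k ∈ range (n + M * n),
      cutSizeS G (univ.filter fun v => ((π (Sum.inl v) : ℕ)) ≤ k) := by
    rw [hcut] at hS
    exact_mod_cast hS
  obtain ⟨k₀, hk₀, hmax⟩ := Finset.exists_max_image (Finset.range (n + M * n))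
    (fun k => cutSizeS G (univ.filter fun v => ((π (Sum.inl v) : ℕ)) ≤ k))
    ⟨0, Finset.mem_range.2 (by omega)⟩
  set c := cutSizeS G (univ.filter fun v => ((π (Sum.inl v) : ℕ)) ≤ k₀) with hc
  have hsum_le : ∑ k ∈ range (n + M * n),
      cutSizeS G (univ.filter fun v => ((π (Sum.inl v) : ℕ)) ≤ k) ≤ (n + M * n) * c := by
    calc ∑ k ∈ range (n + M * n),
        cutSizeS G (univ.filter fun v => ((π (Sum.inl v) : ℕ)) ≤ k)
        ≤ #(range (n + M * n)) • c := Finset.sum_le_card_nsmul _ _ _ hmax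
      _ = (n + M * n) * c := by simp [Finset.card_range, smul_eq_mul]
  have hcm : c ≤ m := by
    rw [hm, hc, cutSizeS, edgeCount]
    refine Finset.card_le_card fun e he => ?_
    simp only [Finset.mem_filter] at he ⊢
    exact ⟨he.1, he.2.1⟩
  refine ⟨univ.filter fun v => ((π (Sum.inl v) : ℕ)) ≤ k₀, ?_⟩
  have h1 : t * M * n ≤ (n + M * n) * c := le_trans hSnat hsum_le
  have h2 : n * (t * M) ≤ n * (c + M * c) := by
    calc n * (t * M) = t * M * n := by ring
      _ ≤ (n + M * n) * c := h1
      _ = n * (c + M * c) := by ring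
  have h3 : t * M ≤ c + M * c := Nat.le_of_mul_le_mul_left h2 (by omega)
  rw [← hc]
  nlinarith [h3, hcm]
end

section
/- Let G be a finite simple graph with n ≥ 1 vertices, let M ≥ 1 be a natural number, and let G' be the simple graph defined as follows: the vertex set of G' is V(G) ⊎ K where |K| = M·n; two vertices of V(G) are adjacent in G' iff they are distinct and non-adjacent in G; any two distinct vertices of K are adjacent in G'; and every vertex of K is adjacent in G' to every vertex of V(G). Then there exists a linear arrangement π of G' of minimum cost (i.e., cost(π) ≤ cost(π') for every linear arrangement π' of G') in which the set K is consecutive. -/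
open Classical

/- ===== Auxiliary machinery ===== -/

open Finset

section Parity
variable {W : Type*} [Fintype W] [DecidableEq W]

lemma sum_sym2_double (F : Sym2 W → ℤ) (hdiag : ∀ u : W, F s(u, u) = 0) :
    ∑ u : W, ∑ v : W, F s(u, v) = 2 * ∑ e : Sym2 W, F e := by
  have h1 : ∑ u : W, ∑ v : W, F s(u, v) = ∑ p : W × W, F s(p.1, p.2) := by
    rw [Fintype.sum_prod_type]
  rw [h1]
  rw [Finset.sum_comp F (fun p : W × W => s(p.1, p.2))]
  have himg : (Finset.univ : Finset (W × W)).image (fun p : W × W => s(p.1, p.2))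
      = Finset.univ := by
    apply Finset.eq_univ_iff_forall.mpr
    intro e
    induction e with
    | _ u v => exact Finset.mem_image.mpr ⟨(u, v), Finset.mem_univ _, rfl⟩
  rw [himg, Finset.mul_sum]
  refine Finset.sum_congr rfl fun e _ => ?_
  induction e with
  | _ u v =>
    by_cases huv : u = v
    · subst huv
      rw [hdiag u]
      simp
    · have hfib : Finset.univ.filter (fun p : W × W => s(p.1, p.2) = s(u, v))
          = {(u, v), (v, u)} := by
        ext ⟨p1, p2⟩
        simp [Sym2.eq_iff, Prod.ext_iff]
      rw [hfib]
      rw [Finset.card_insert_of_notMem (by simp [huv]), Finset.card_singleton]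
      rw [nsmul_eq_mul]
      norm_num

lemma two_mul_lincost (H : SimpleGraph W) (f : W → ℤ) :
    ∑ u : W, ∑ v : W, (if H.Adj u v then |f u - f v| else 0) = 2 * lincost H f := by
  set F : Sym2 W → ℤ := Sym2.lift ⟨fun u v => if H.Adj u v then |f u - f v| else 0, by
    intro u v
    simp only []
    rw [SimpleGraph.adj_comm, abs_sub_comm]⟩ with hF
  have hdiag : ∀ u : W, F s(u, u) = 0 := by
    intro u
    simp [hF, H.irrefl]
  have h1 : ∑ u : W, ∑ v : W, (if H.Adj u v then |f u - f v| else 0)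
      = ∑ u : W, ∑ v : W, F s(u, v) := by
    refine Finset.sum_congr rfl fun u _ => Finset.sum_congr rfl fun v _ => ?_
    simp [hF]
  rw [h1, sum_sym2_double F hdiag]
  congr 1
  unfold lincost
  rw [Finset.sum_filter]
  refine Finset.sum_congr rfl fun e _ => ?_
  induction e with
  | _ u v => simp [hF, SimpleGraph.mem_edgeSet]

noncomputable def qcost (H : SimpleGraph W) (f : W → ℤ) : ℤ :=
  ∑ u : W, ∑ v : W, if H.Adj u v then |f u - f v| else 0

lemma qcost_eq_two_mul (H : SimpleGraph W) (f : W → ℤ) :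
    qcost H f = 2 * lincost H f :=
  two_mul_lincost H f

lemma qcost_swap (H : SimpleGraph W) (f : W → ℤ) {a b : W} (hab : a ≠ b)
    (hb : ∀ u, u ≠ a → u ≠ b → H.Adj a u → H.Adj b u) :
    qcost H (f ∘ Equiv.swap a b) = qcost H f +
      2 * ∑ u ∈ Finset.univ.filter
          (fun u => u ≠ a ∧ u ≠ b ∧ H.Adj b u ∧ ¬ H.Adj a u),
        (|f u - f a| - |f u - f b|) := by
  set σ := Equiv.swap a b with hσ
  have hσa : σ a = b := Equiv.swap_apply_left a b
  have hσb : σ b = a := Equiv.swap_apply_right a b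
  have hσo : ∀ u, u ≠ a → u ≠ b → σ u = u := fun u h1 h2 =>
    Equiv.swap_apply_of_ne_of_ne h1 h2
  have hσσ : ∀ u, σ (σ u) = u := fun u => Equiv.swap_apply_self a b u
  set S := Finset.univ.filter
      (fun u => u ≠ a ∧ u ≠ b ∧ H.Adj b u ∧ ¬ H.Adj a u) with hS
  have hmemS : ∀ u, u ∈ S ↔ (u ≠ a ∧ u ≠ b ∧ H.Adj b u ∧ ¬ H.Adj a u) := by
    intro u; simp [hS]
  -- step 1 : reindex
  have key : ∀ P : W → W → ℤ,
      ∑ u : W, ∑ v : W, P (σ u) (σ v) = ∑ u : W, ∑ v : W, P u v := by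
    intro P
    calc ∑ u : W, ∑ v : W, P (σ u) (σ v)
        = ∑ u : W, ∑ v : W, P (σ u) v :=
          Finset.sum_congr rfl (fun u _ => Equiv.sum_comp σ (fun v => P (σ u) v))
      _ = ∑ u : W, ∑ v : W, P u v := Equiv.sum_comp σ (fun u => ∑ v : W, P u v)
  have e1 : qcost H (f ∘ σ)
      = ∑ u : W, ∑ v : W, (if H.Adj (σ u) (σ v) then |f u - f v| else 0) := by
    have h := key (fun s t => if H.Adj s t then |f (σ s) - f (σ t)| else 0)
    simp only [hσσ] at h
    unfold qcost
    simp only [Function.comp_apply]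
    exact h.symm
  -- step 2 : difference function
  set d : W → W → ℤ := fun u v =>
    (if H.Adj (σ u) (σ v) then |f u - f v| else 0) -
      (if H.Adj u v then |f u - f v| else 0) with hd
  have e3 : qcost H (f ∘ σ) = qcost H f + ∑ u : W, ∑ v : W, d u v := by
    rw [e1]
    unfold qcost
    rw [← Finset.sum_add_distrib]
    refine Finset.sum_congr rfl fun u _ => ?_
    rw [← Finset.sum_add_distrib]
    refine Finset.sum_congr rfl fun v _ => ?_
    simp [hd]
  -- row computations
  have hda : ∀ v : W, d a v = (if v ∈ S then |f a - f v| else 0) := by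
    intro v
    rcases eq_or_ne v a with rfl | hva
    · have hns : v ∉ S := by simp [hmemS]
      simp [hd, hns, H.irrefl]
    rcases eq_or_ne v b with rfl | hvb
    · have hns : v ∉ S := by simp [hmemS]
      have hz : d a v = 0 := by
        by_cases h : H.Adj a v
        · simp [hd, hσa, hσb, h, h.symm]
        · have h2 : ¬ H.Adj v a := fun hh => h hh.symm
          simp [hd, hσa, hσb, h, h2]
      simp [hz, hns]
    · have hσv : σ v = v := hσo v hva hvb
      by_cases hav : H.Adj a v
      · have hbv : H.Adj b v := hb v hva hvb hav
        have hns : v ∉ S := by simp [hmemS, hav]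
        simp [hd, hσa, hσv, hav, hbv, hns]
      · by_cases hbv : H.Adj b v
        · have hins : v ∈ S := by simp [hmemS, hva, hvb, hbv, hav]
          simp [hd, hσa, hσv, hav, hbv, hins]
        · have hns : v ∉ S := by simp [hmemS, hbv]
          simp [hd, hσa, hσv, hav, hbv, hns]
  have hdb : ∀ v : W, d b v = (if v ∈ S then -|f b - f v| else 0) := by
    intro v
    rcases eq_or_ne v a with rfl | hva
    · have hns : v ∉ S := by simp [hmemS]
      have hz : d b v = 0 := by
        by_cases h : H.Adj b v
        · simp [hd, hσa, hσb, h, h.symm]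
        · have h2 : ¬ H.Adj v b := fun hh => h hh.symm
          simp [hd, hσa, hσb, h, h2]
      simp [hz, hns]
    rcases eq_or_ne v b with rfl | hvb
    · have hns : v ∉ S := by simp [hmemS]
      simp [hd, hns, H.irrefl]
    · have hσv : σ v = v := hσo v hva hvb
      by_cases hav : H.Adj a v
      · have hbv : H.Adj b v := hb v hva hvb hav
        have hns : v ∉ S := by simp [hmemS, hav]
        simp [hd, hσb, hσv, hav, hbv, hns]
      · by_cases hbv : H.Adj b v
        · have hins : v ∈ S := by simp [hmemS, hva, hvb, hbv, hav]
          simp [hd, hσb, hσv, hav, hbv, hins]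
        · have hns : v ∉ S := by simp [hmemS, hbv]
          simp [hd, hσb, hσv, hav, hbv, hns]
  have hrowu : ∀ u, u ≠ a → u ≠ b →
      ∑ v : W, d u v = (if u ∈ S then (|f u - f a| - |f u - f b|) else 0) := by
    intro u hua hub
    have hσu : σ u = u := hσo u hua hub
    have hzero : ∀ c ∈ (Finset.univ : Finset W), c ≠ a ∧ c ≠ b → d u c = 0 := by
      rintro c _ ⟨hca, hcb⟩
      have hσc : σ c = c := hσo c hca hcb
      simp [hd, hσu, hσc]
    have hsum : ∑ v : W, d u v = d u a + d u b :=
      Finset.sum_eq_add_of_mem a b (Finset.mem_univ a) (Finset.mem_univ b) hab hzero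
    have hdua : d u a = (if u ∈ S then |f u - f a| else 0) := by
      by_cases hau : H.Adj a u
      · have hbu : H.Adj b u := hb u hua hub hau
        have hns : u ∉ S := by simp [hmemS, hau]
        simp [hd, hσa, hσu, hau.symm, hbu.symm, hns]
      · by_cases hbu : H.Adj b u
        · have hins : u ∈ S := by simp [hmemS, hua, hub, hbu, hau]
          have h2 : ¬ H.Adj u a := fun h => hau h.symm
          simp [hd, hσa, hσu, hbu.symm, h2, hins]
        · have hns : u ∉ S := by simp [hmemS, hbu]
          have h1 : ¬ H.Adj u b := fun h => hbu h.symm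
          have h2 : ¬ H.Adj u a := fun h => hau h.symm
          simp [hd, hσa, hσu, h1, h2, hns]
    have hdub : d u b = (if u ∈ S then -|f u - f b| else 0) := by
      by_cases hau : H.Adj a u
      · have hbu : H.Adj b u := hb u hua hub hau
        have hns : u ∉ S := by simp [hmemS, hau]
        simp [hd, hσb, hσu, hau.symm, hbu.symm, hns]
      · by_cases hbu : H.Adj b u
        · have hins : u ∈ S := by simp [hmemS, hua, hub, hbu, hau]
          have h2 : ¬ H.Adj u a := fun h => hau h.symm
          simp [hd, hσb, hσu, hbu.symm, h2, hins]
        · have hns : u ∉ S := by simp [hmemS, hbu]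
          have h1 : ¬ H.Adj u b := fun h => hbu h.symm
          have h2 : ¬ H.Adj u a := fun h => hau h.symm
          simp [hd, hσb, hσu, h1, h2, hns]
    rw [hsum, hdua, hdub]
    by_cases h : u ∈ S
    · simp [h]; ring
    · simp [h]
  -- assemble
  have hSsub : S ⊆ (Finset.univ.erase a).erase b := by
    intro u hu
    rw [hmemS] at hu
    exact Finset.mem_erase.mpr ⟨hu.2.1, Finset.mem_erase.mpr ⟨hu.1, Finset.mem_univ u⟩⟩
  have hrowa : ∑ v : W, d a v = ∑ v ∈ S, |f a - f v| := by
    rw [Finset.sum_congr rfl (fun v _ => hda v), Finset.sum_ite_mem, Finset.univ_inter]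
  have hrowb : ∑ v : W, d b v = ∑ v ∈ S, -|f b - f v| := by
    rw [Finset.sum_congr rfl (fun v _ => hdb v), Finset.sum_ite_mem, Finset.univ_inter]
  have hrest : ∑ u ∈ (Finset.univ.erase a).erase b, ∑ v : W, d u v
      = ∑ u ∈ S, (|f u - f a| - |f u - f b|) := by
    rw [Finset.sum_congr rfl (fun u hu => hrowu u
      (Finset.mem_erase.mp (Finset.mem_erase.mp hu).2).1 (Finset.mem_erase.mp hu).1),
      Finset.sum_ite_mem, Finset.inter_eq_right.mpr hSsub]
  have hsplit : ∑ u : W, ∑ v : W, d u v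
      = (∑ v : W, d a v) + ((∑ v : W, d b v)
        + ∑ u ∈ (Finset.univ.erase a).erase b, ∑ v : W, d u v) := by
    rw [← Finset.add_sum_erase _ _ (Finset.mem_univ a),
      ← Finset.add_sum_erase _ _ (Finset.mem_erase.mpr ⟨Ne.symm hab, Finset.mem_univ b⟩)]
  have habs1 : ∑ v ∈ S, |f a - f v| = ∑ v ∈ S, |f v - f a| :=
    Finset.sum_congr rfl fun v _ => abs_sub_comm _ _
  have habs2 : ∑ v ∈ S, -|f b - f v| = -∑ v ∈ S, |f v - f b| := by
    rw [← Finset.sum_neg_distrib]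
    exact Finset.sum_congr rfl fun v _ => by rw [abs_sub_comm]
  rw [e3, hsplit, hrowa, hrowb, hrest, habs1, habs2, Finset.sum_sub_distrib]
  ring

end Parity

section GareyAdj
variable {V : Type*} {G : SimpleGraph V} {N : ℕ}

lemma garey_adj_inl_inl {x y : V} :
    (gareyGraph G N).Adj (Sum.inl x) (Sum.inl y) ↔ x ≠ y ∧ ¬ G.Adj x y := by
  constructor
  · rintro ⟨hne, h⟩
    exact ⟨fun e => hne (by rw [e]), h x y rfl rfl⟩
  · rintro ⟨hne, h⟩
    refine ⟨by simp [hne], fun u v hu hv => ?_⟩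
    injection hu with hu'; injection hv with hv'
    subst hu'; subst hv'; exact h

lemma garey_adj_inl_inr (x : V) (k : Fin N) :
    (gareyGraph G N).Adj (Sum.inl x) (Sum.inr k) :=
  ⟨by simp, fun u v _ hv => by cases hv⟩

lemma garey_adj_inr {k : Fin N} {w : V ⊕ Fin N} (h : w ≠ Sum.inr k) :
    (gareyGraph G N).Adj (Sum.inr k) w :=
  ⟨fun hh => h hh.symm, fun u v hu _ => by cases hu⟩

lemma garey_S (x : V) (k : Fin N) [Fintype V] [DecidableEq V] :
    (Finset.univ.filter fun u : V ⊕ Fin N =>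
        u ≠ Sum.inl x ∧ u ≠ Sum.inr k ∧ (gareyGraph G N).Adj (Sum.inr k) u ∧
          ¬ (gareyGraph G N).Adj (Sum.inl x) u)
      = (G.neighborFinset x).image Sum.inl := by
  ext u
  simp only [Finset.mem_filter, Finset.mem_univ, true_and, Finset.mem_image,
    SimpleGraph.mem_neighborFinset]
  constructor
  · rintro ⟨hua, hub, -, hnadj⟩
    match u with
    | Sum.inr j => exact absurd (garey_adj_inl_inr x j) hnadj
    | Sum.inl w =>
      refine ⟨w, ?_, rfl⟩
      rw [garey_adj_inl_inl] at hnadj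
      push_neg at hnadj
      exact hnadj (fun e => hua (by rw [e]))
  · rintro ⟨w, hadj, rfl⟩
    have hxw : x ≠ w := G.ne_of_adj hadj
    refine ⟨by simp [Ne, hxw.symm], by simp, garey_adj_inr (by simp), ?_⟩
    rw [garey_adj_inl_inl]
    push_neg
    exact fun _ => hadj

end GareyAdj

lemma garey_swap_cost {V : Type*} [Fintype V] [DecidableEq V] (G : SimpleGraph V)
    {N T : ℕ} (π : (V ⊕ Fin N) ≃ Fin T) (x : V) (k : Fin N) :
    qcost (gareyGraph G N)
        (fun v => ((((Equiv.swap (Sum.inl x) (Sum.inr k)).trans π) v : ℕ) : ℤ))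
      = qcost (gareyGraph G N) (fun v => ((π v : ℕ) : ℤ))
        + 2 * ∑ w ∈ G.neighborFinset x,
            (|((π (Sum.inl w) : ℕ) : ℤ) - ((π (Sum.inl x) : ℕ) : ℤ)|
              - |((π (Sum.inl w) : ℕ) : ℤ) - ((π (Sum.inr k) : ℕ) : ℤ)|) := by
  have hab : (Sum.inl x : V ⊕ Fin N) ≠ Sum.inr k := by simp
  have hb : ∀ u, u ≠ Sum.inl x → u ≠ Sum.inr k →
      (gareyGraph G N).Adj (Sum.inl x) u → (gareyGraph G N).Adj (Sum.inr k) u :=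
    fun u _ h2 _ => garey_adj_inr h2
  have h := qcost_swap (gareyGraph G N) (fun v => ((π v : ℕ) : ℤ)) hab hb
  rw [garey_S x k, Finset.sum_image
    (fun w _ w' _ hww => Sum.inl_injective hww)] at h
  exact h

lemma convex_abs (q p r₁ r₂ : ℤ) (h1 : r₁ ≤ p) (h2 : p ≤ r₂) :
    (r₂ - r₁) * |q - p| ≤ (r₂ - p) * |q - r₁| + (p - r₁) * |q - r₂| := by
  have key : (r₂ - r₁) * (q - p) = (r₂ - p) * (q - r₁) + (p - r₁) * (q - r₂) := by ring
  calc (r₂ - r₁) * |q - p| = |(r₂ - r₁) * (q - p)| := by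
        rw [abs_mul, abs_of_nonneg (by linarith : (0:ℤ) ≤ r₂ - r₁)]
    _ = |(r₂ - p) * (q - r₁) + (p - r₁) * (q - r₂)| := by rw [key]
    _ ≤ |(r₂ - p) * (q - r₁)| + |(p - r₁) * (q - r₂)| := abs_add_le _ _
    _ = (r₂ - p) * |q - r₁| + (p - r₁) * |q - r₂| := by
        rw [abs_mul, abs_mul, abs_of_nonneg (by linarith : (0:ℤ) ≤ r₂ - p),
          abs_of_nonneg (by linarith : (0:ℤ) ≤ p - r₁)]

lemma delta_choice {ι : Type*} (s : Finset ι) (g : ι → ℤ) (p r₁ r₂ : ℤ)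
    (h1 : r₁ < p) (h2 : p < r₂) :
    (∑ w ∈ s, (|g w - p| - |g w - r₁|)) ≤ 0 ∨
      (∑ w ∈ s, (|g w - p| - |g w - r₂|)) ≤ 0 := by
  by_contra hcon
  push_neg at hcon
  obtain ⟨hA, hB⟩ := hcon
  have hsum : (r₂ - p) * (∑ w ∈ s, (|g w - p| - |g w - r₁|))
      + (p - r₁) * (∑ w ∈ s, (|g w - p| - |g w - r₂|)) ≤ 0 := by
    rw [Finset.mul_sum, Finset.mul_sum, ← Finset.sum_add_distrib]
    apply Finset.sum_nonpos
    intro w _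
    have hc := convex_abs (g w) p r₁ r₂ h1.le h2.le
    nlinarith [hc]
  nlinarith [mul_pos (by linarith : (0:ℤ) < r₂ - p) hA,
    mul_pos (by linarith : (0:ℤ) < p - r₁) hB]

noncomputable def insideSet {V : Type*} [Fintype V] [DecidableEq V] {N T : ℕ}
    (π : (V ⊕ Fin N) ≃ Fin T) : Finset V :=
  Finset.univ.filter (fun v =>
    (∃ j, (π (Sum.inr j) : ℕ) < (π (Sum.inl v) : ℕ)) ∧
    (∃ j, (π (Sum.inl v) : ℕ) < (π (Sum.inr j) : ℕ)))

section Inside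
variable {V : Type*} [Fintype V] [DecidableEq V] {N T : ℕ}

lemma mem_insideSet {π : (V ⊕ Fin N) ≃ Fin T} {v : V} :
    v ∈ insideSet π ↔
      (∃ j, (π (Sum.inr j) : ℕ) < (π (Sum.inl v) : ℕ)) ∧
      (∃ j, (π (Sum.inl v) : ℕ) < (π (Sum.inr j) : ℕ)) := by
  simp [insideSet]

lemma inside_swap_min (π : (V ⊕ Fin N) ≃ Fin T) (x : V) (hx : x ∈ insideSet π)
    (j₁ : Fin N) (hmin : ∀ j, (π (Sum.inr j₁) : ℕ) ≤ (π (Sum.inr j) : ℕ)) :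
    insideSet ((Equiv.swap (Sum.inl x) (Sum.inr j₁)).trans π) ⊂ insideSet π := by
  set σ := Equiv.swap (Sum.inl x : V ⊕ Fin N) (Sum.inr j₁) with hσ
  set π' := σ.trans π with hπ'
  obtain ⟨⟨jl, hjl⟩, ⟨jr, hjr⟩⟩ := mem_insideSet.mp hx
  have hxlt : (π (Sum.inr j₁) : ℕ) < (π (Sum.inl x) : ℕ) := lt_of_le_of_lt (hmin jl) hjl
  have hπ'x : π' (Sum.inl x) = π (Sum.inr j₁) := by
    simp [hπ', hσ, Equiv.swap_apply_left]
  have hπ'j₁ : π' (Sum.inr j₁) = π (Sum.inl x) := by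
    simp [hπ', hσ, Equiv.swap_apply_right]
  have hπ'v : ∀ v : V, v ≠ x → π' (Sum.inl v) = π (Sum.inl v) := by
    intro v hv
    have h1 : (Sum.inl v : V ⊕ Fin N) ≠ Sum.inl x := by simp [hv]
    have h2 : (Sum.inl v : V ⊕ Fin N) ≠ Sum.inr j₁ := by simp
    simp [hπ', hσ, Equiv.swap_apply_of_ne_of_ne h1 h2]
  have hπ'j : ∀ j : Fin N, j ≠ j₁ → π' (Sum.inr j) = π (Sum.inr j) := by
    intro j hj
    have h1 : (Sum.inr j : V ⊕ Fin N) ≠ Sum.inl x := by simp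
    have h2 : (Sum.inr j : V ⊕ Fin N) ≠ Sum.inr j₁ := by simp [hj]
    simp [hπ', hσ, Equiv.swap_apply_of_ne_of_ne h1 h2]
  have hxnot : x ∉ insideSet π' := by
    intro hmem
    obtain ⟨⟨ja, hja⟩, -⟩ := mem_insideSet.mp hmem
    rw [hπ'x] at hja
    rcases eq_or_ne ja j₁ with rfl | hne
    · rw [hπ'j₁] at hja
      exact absurd hja (by omega)
    · rw [hπ'j ja hne] at hja
      exact absurd hja (by have := hmin ja; omega)
  have hsub : insideSet π' ⊆ insideSet π := by
    intro v hv
    rcases eq_or_ne v x with rfl | hvx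
    · exact absurd hv hxnot
    obtain ⟨⟨ja, hja⟩, ⟨jb, hjb⟩⟩ := mem_insideSet.mp hv
    rw [hπ'v v hvx] at hja hjb
    refine mem_insideSet.mpr ⟨?_, ?_⟩
    · rcases eq_or_ne ja j₁ with rfl | hne
      · rw [hπ'j₁] at hja
        exact ⟨jl, by omega⟩
      · rw [hπ'j ja hne] at hja
        exact ⟨ja, hja⟩
    · rcases eq_or_ne jb j₁ with rfl | hne
      · rw [hπ'j₁] at hjb
        exact ⟨jr, by omega⟩
      · rw [hπ'j jb hne] at hjb
        exact ⟨jb, hjb⟩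
  rw [Finset.ssubset_iff_of_subset hsub]
  exact ⟨x, hx, hxnot⟩

lemma inside_swap_max (π : (V ⊕ Fin N) ≃ Fin T) (x : V) (hx : x ∈ insideSet π)
    (j₂ : Fin N) (hmax : ∀ j, (π (Sum.inr j) : ℕ) ≤ (π (Sum.inr j₂) : ℕ)) :
    insideSet ((Equiv.swap (Sum.inl x) (Sum.inr j₂)).trans π) ⊂ insideSet π := by
  set σ := Equiv.swap (Sum.inl x : V ⊕ Fin N) (Sum.inr j₂) with hσ
  set π' := σ.trans π with hπ'
  obtain ⟨⟨jl, hjl⟩, ⟨jr, hjr⟩⟩ := mem_insideSet.mp hx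
  have hxlt : (π (Sum.inl x) : ℕ) < (π (Sum.inr j₂) : ℕ) := lt_of_lt_of_le hjr (hmax jr)
  have hπ'x : π' (Sum.inl x) = π (Sum.inr j₂) := by
    simp [hπ', hσ, Equiv.swap_apply_left]
  have hπ'j₂ : π' (Sum.inr j₂) = π (Sum.inl x) := by
    simp [hπ', hσ, Equiv.swap_apply_right]
  have hπ'v : ∀ v : V, v ≠ x → π' (Sum.inl v) = π (Sum.inl v) := by
    intro v hv
    have h1 : (Sum.inl v : V ⊕ Fin N) ≠ Sum.inl x := by simp [hv]
    have h2 : (Sum.inl v : V ⊕ Fin N) ≠ Sum.inr j₂ := by simp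
    simp [hπ', hσ, Equiv.swap_apply_of_ne_of_ne h1 h2]
  have hπ'j : ∀ j : Fin N, j ≠ j₂ → π' (Sum.inr j) = π (Sum.inr j) := by
    intro j hj
    have h1 : (Sum.inr j : V ⊕ Fin N) ≠ Sum.inl x := by simp
    have h2 : (Sum.inr j : V ⊕ Fin N) ≠ Sum.inr j₂ := by simp [hj]
    simp [hπ', hσ, Equiv.swap_apply_of_ne_of_ne h1 h2]
  have hxnot : x ∉ insideSet π' := by
    intro hmem
    obtain ⟨-, ⟨jb, hjb⟩⟩ := mem_insideSet.mp hmem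
    rw [hπ'x] at hjb
    rcases eq_or_ne jb j₂ with rfl | hne
    · rw [hπ'j₂] at hjb
      exact absurd hjb (by omega)
    · rw [hπ'j jb hne] at hjb
      exact absurd hjb (by have := hmax jb; omega)
  have hsub : insideSet π' ⊆ insideSet π := by
    intro v hv
    rcases eq_or_ne v x with rfl | hvx
    · exact absurd hv hxnot
    obtain ⟨⟨ja, hja⟩, ⟨jb, hjb⟩⟩ := mem_insideSet.mp hv
    rw [hπ'v v hvx] at hja hjb
    refine mem_insideSet.mpr ⟨?_, ?_⟩
    · rcases eq_or_ne ja j₂ with rfl | hne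
      · rw [hπ'j₂] at hja
        exact ⟨jl, by omega⟩
      · rw [hπ'j ja hne] at hja
        exact ⟨ja, hja⟩
    · rcases eq_or_ne jb j₂ with rfl | hne
      · rw [hπ'j₂] at hjb
        exact ⟨jr, by omega⟩
      · rw [hπ'j jb hne] at hjb
        exact ⟨jb, hjb⟩
  rw [Finset.ssubset_iff_of_subset hsub]
  exact ⟨x, hx, hxnot⟩

end Inside
/-- For the graph `G'` obtained by adding a fully connected clique `K` of `M·n` fresh
vertices to the complement of `G` (where `G` has `n ≥ 1` vertices), there is a linear
arrangement of `G'` of minimum cost in which the clique `K` is consecutive. -/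
theorem exists_optimal_arrangement_clique_consecutive
    {V : Type*} [Fintype V] [DecidableEq V] (G : SimpleGraph V)
    (n : ℕ) (hn : n = Fintype.card V) (hn1 : 1 ≤ n)
    (M : ℕ) (hM : 1 ≤ M) :
    ∃ π : (V ⊕ Fin (M * n)) ≃ Fin (n + M * n),
      (∀ π' : (V ⊕ Fin (M * n)) ≃ Fin (n + M * n),
        lincost (gareyGraph G (M * n)) (fun v => ((π v : ℕ) : ℤ)) ≤
          lincost (gareyGraph G (M * n)) (fun v => ((π' v : ℕ) : ℤ))) ∧
      ∃ a : ℕ, ∀ j : Fin (M * n),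
        a ≤ (π (Sum.inr j) : ℕ) ∧ (π (Sum.inr j) : ℕ) < a + M * n := by
  classical
  set L : ((V ⊕ Fin (M * n)) ≃ Fin (n + M * n)) → ℤ :=
    fun π => lincost (gareyGraph G (M * n)) (fun v => ((π v : ℕ) : ℤ)) with hL
  have hQL : ∀ π : (V ⊕ Fin (M * n)) ≃ Fin (n + M * n),
      qcost (gareyGraph G (M * n)) (fun v => ((π v : ℕ) : ℤ)) = 2 * L π := by
    intro π
    rw [hL]
    exact qcost_eq_two_mul _ _
  have Npos : 0 < M * n := Nat.mul_pos hM hn1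
  have cardEq : Fintype.card (V ⊕ Fin (M * n)) = n + M * n := by
    rw [Fintype.card_sum, Fintype.card_fin, ← hn]
  obtain ⟨π₁, -, hπ₁⟩ := Finset.exists_min_image (Finset.univ) L
    ⟨Fintype.equivFinOfCardEq cardEq, Finset.mem_univ _⟩
  have hmin₁ : ∀ π', L π₁ ≤ L π' := fun π' => hπ₁ π' (Finset.mem_univ _)
  -- descent to an optimal arrangement with no vertex inside the clique span
  have key : ∀ (c : ℕ) (π : (V ⊕ Fin (M * n)) ≃ Fin (n + M * n)),
      (∀ π', L π ≤ L π') → (insideSet π).card ≤ c →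
      ∃ π₂, (∀ π', L π₂ ≤ L π') ∧ insideSet π₂ = ∅ := by
    intro c
    induction c with
    | zero =>
      intro π hminπ hcard
      exact ⟨π, hminπ, Finset.card_eq_zero.mp (Nat.le_zero.mp hcard)⟩
    | succ c ih =>
      intro π hminπ hcard
      by_cases hempty : insideSet π = ∅
      · exact ⟨π, hminπ, hempty⟩
      obtain ⟨x, hx⟩ := Finset.nonempty_iff_ne_empty.mpr hempty
      obtain ⟨j₁, -, hj₁⟩ := Finset.exists_min_image Finset.univ
        (fun j : Fin (M * n) => (π (Sum.inr j) : ℕ)) ⟨⟨0, Npos⟩, Finset.mem_univ _⟩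
      obtain ⟨j₂, -, hj₂⟩ := Finset.exists_max_image Finset.univ
        (fun j : Fin (M * n) => (π (Sum.inr j) : ℕ)) ⟨⟨0, Npos⟩, Finset.mem_univ _⟩
      have hj₁' : ∀ j, (π (Sum.inr j₁) : ℕ) ≤ (π (Sum.inr j) : ℕ) :=
        fun j => hj₁ j (Finset.mem_univ _)
      have hj₂' : ∀ j, (π (Sum.inr j) : ℕ) ≤ (π (Sum.inr j₂) : ℕ) :=
        fun j => hj₂ j (Finset.mem_univ _)
      obtain ⟨⟨jl, hjl⟩, ⟨jr, hjr⟩⟩ := mem_insideSet.mp hx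
      have hr₁ : ((π (Sum.inr j₁) : ℕ) : ℤ) < ((π (Sum.inl x) : ℕ) : ℤ) := by
        have := lt_of_le_of_lt (hj₁' jl) hjl
        exact_mod_cast this
      have hr₂ : ((π (Sum.inl x) : ℕ) : ℤ) < ((π (Sum.inr j₂) : ℕ) : ℤ) := by
        have := lt_of_lt_of_le hjr (hj₂' jr)
        exact_mod_cast this
      have hchoice := delta_choice (G.neighborFinset x)
        (fun w => ((π (Sum.inl w) : ℕ) : ℤ))
        ((π (Sum.inl x) : ℕ) : ℤ) ((π (Sum.inr j₁) : ℕ) : ℤ) ((π (Sum.inr j₂) : ℕ) : ℤ)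
        hr₁ hr₂
      rcases hchoice with hΔ | hΔ
      · have hcost := garey_swap_cost G π x j₁
        set π' := (Equiv.swap (Sum.inl x : V ⊕ Fin (M * n)) (Sum.inr j₁)).trans π with hπ'd
        have hLle : L π' ≤ L π := by
          have h1 := hQL π'
          have h2 := hQL π
          rw [h1, h2] at hcost
          linarith [hΔ]
        have hmin' : ∀ π'', L π' ≤ L π'' := fun π'' => le_trans hLle (hminπ π'')
        have hss := inside_swap_min π x hx j₁ hj₁'
        have hlt : (insideSet π').card < (insideSet π).card := Finset.card_lt_card hss
        exact ih π' hmin' (by omega)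
      · have hcost := garey_swap_cost G π x j₂
        set π' := (Equiv.swap (Sum.inl x : V ⊕ Fin (M * n)) (Sum.inr j₂)).trans π with hπ'd
        have hLle : L π' ≤ L π := by
          have h1 := hQL π'
          have h2 := hQL π
          rw [h1, h2] at hcost
          linarith [hΔ]
        have hmin' : ∀ π'', L π' ≤ L π'' := fun π'' => le_trans hLle (hminπ π'')
        have hss := inside_swap_max π x hx j₂ hj₂'
        have hlt : (insideSet π').card < (insideSet π).card := Finset.card_lt_card hss
        exact ih π' hmin' (by omega)
  obtain ⟨π₂, hmin₂, hins⟩ := key (insideSet π₁).card π₁ hmin₁ le_rfl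
  -- extract consecutiveness
  obtain ⟨j₁, -, hj₁⟩ := Finset.exists_min_image Finset.univ
    (fun j : Fin (M * n) => (π₂ (Sum.inr j) : ℕ)) ⟨⟨0, Npos⟩, Finset.mem_univ _⟩
  obtain ⟨j₂, -, hj₂⟩ := Finset.exists_max_image Finset.univ
    (fun j : Fin (M * n) => (π₂ (Sum.inr j) : ℕ)) ⟨⟨0, Npos⟩, Finset.mem_univ _⟩
  have hj₁' : ∀ j, (π₂ (Sum.inr j₁) : ℕ) ≤ (π₂ (Sum.inr j) : ℕ) :=
    fun j => hj₁ j (Finset.mem_univ _)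
  have hj₂' : ∀ j, (π₂ (Sum.inr j) : ℕ) ≤ (π₂ (Sum.inr j₂) : ℕ) :=
    fun j => hj₂ j (Finset.mem_univ _)
  have hb : (π₂ (Sum.inr j₂) : ℕ) < (π₂ (Sum.inr j₁) : ℕ) + M * n := by
    by_contra hge
    push_neg at hge
    set S := Finset.univ.image (fun j : Fin (M * n) => (π₂ (Sum.inr j) : ℕ)) with hSdef
    have hinj : Function.Injective (fun j : Fin (M * n) => (π₂ (Sum.inr j) : ℕ)) := by
      intro i j h
      have h1 : π₂ (Sum.inr i) = π₂ (Sum.inr j) := Fin.val_injective h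
      exact Sum.inr_injective (π₂.injective h1)
    have hcardS : S.card = M * n := by
      rw [hSdef, Finset.card_image_of_injective _ hinj, Finset.card_univ, Fintype.card_fin]
    have hsubS : S ⊆ Finset.Icc ((π₂ (Sum.inr j₁) : ℕ)) ((π₂ (Sum.inr j₂) : ℕ)) := by
      intro t ht
      obtain ⟨j, -, rfl⟩ := Finset.mem_image.mp ht
      exact Finset.mem_Icc.mpr ⟨hj₁' j, hj₂' j⟩
    have hex : ∃ t ∈ Finset.Icc ((π₂ (Sum.inr j₁) : ℕ)) ((π₂ (Sum.inr j₂) : ℕ)), t ∉ S := by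
      by_contra hno
      push_neg at hno
      have hsub2 : Finset.Icc ((π₂ (Sum.inr j₁) : ℕ)) ((π₂ (Sum.inr j₂) : ℕ)) ⊆ S :=
        fun t ht => hno t ht
      have hcc := Finset.card_le_card hsub2
      rw [Nat.card_Icc, hcardS] at hcc
      omega
    obtain ⟨t, htIcc, htS⟩ := hex
    rw [Finset.mem_Icc] at htIcc
    have htT : t < n + M * n := lt_of_le_of_lt htIcc.2 (π₂ (Sum.inr j₂)).isLt
    obtain ⟨w, hπw⟩ : ∃ w, π₂ w = ⟨t, htT⟩ := ⟨π₂.symm _, π₂.apply_symm_apply _⟩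
    have haS : (π₂ (Sum.inr j₁) : ℕ) ∈ S :=
      Finset.mem_image.mpr ⟨j₁, Finset.mem_univ _, rfl⟩
    have hbS : (π₂ (Sum.inr j₂) : ℕ) ∈ S :=
      Finset.mem_image.mpr ⟨j₂, Finset.mem_univ _, rfl⟩
    match w, hπw with
    | Sum.inr j, hπw =>
      apply htS
      refine Finset.mem_image.mpr ⟨j, Finset.mem_univ _, ?_⟩
      rw [hπw]
    | Sum.inl v, hπw =>
      have hvt : (π₂ (Sum.inl v) : ℕ) = t := by rw [hπw]
      have hta : (π₂ (Sum.inr j₁) : ℕ) < t := by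
        rcases Nat.lt_or_ge ((π₂ (Sum.inr j₁) : ℕ)) t with h | h
        · exact h
        · have : (π₂ (Sum.inr j₁) : ℕ) = t := le_antisymm htIcc.1 h
          exact absurd (this ▸ haS) htS
      have htb : t < (π₂ (Sum.inr j₂) : ℕ) := by
        rcases Nat.lt_or_ge t ((π₂ (Sum.inr j₂) : ℕ)) with h | h
        · exact h
        · have : t = (π₂ (Sum.inr j₂) : ℕ) := le_antisymm htIcc.2 h
          exact absurd (this ▸ hbS) htS
      have hvmem : v ∈ insideSet π₂ :=
        mem_insideSet.mpr ⟨⟨j₁, by rw [hvt]; exact hta⟩, ⟨j₂, by rw [hvt]; exact htb⟩⟩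
      rw [hins] at hvmem
      exact absurd hvmem (Finset.notMem_empty v)
  refine ⟨π₂, fun π' => hmin₂ π', ⟨(π₂ (Sum.inr j₁) : ℕ), fun j => ⟨hj₁' j, ?_⟩⟩⟩
  exact lt_of_le_of_lt (hj₂' j) hb
end
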